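/- Let T : ℝ² → ℝ² be the shear map given by the matrix with rows (1, 1) and (0, 1), let r > 0, let B be the closed ball of radius r around the origin in ℝ² with indicator function χ, and let μ be a real-valued functional on bounded measurable functions ℝ² → ℝ satisfying: (i) semi-locality, μ(f) = μ(χ · f) for all f; (ii) invariance, μ(f ∘ T⁻¹) = μ(f) for all f; (iii) continuity, whenever (fₙ) is a uniformly bounded sequence of measurable functions supported in B with ∫ |fₙ| → 0, then μ(fₙ) → μ(0). Then μ is constant: μ(f) = μ(0) for every bounded measurable f. -/

import Mathlib

open MeasureTheory Matrix

/-- The shear matrix with rows `(1, 1)` and `(0, 1)`. -/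
def shearT : Matrix (Fin 2) (Fin 2) ℝ := !![1, 1; 0, 1]

def Mk (k : ℕ) : Matrix (Fin 2) (Fin 2) ℝ := !![1, -(k:ℝ); 0, 1]

lemma shearT_inv : shearT⁻¹ = Mk 1 := by
  apply Matrix.inv_eq_left_inv
  simp [shearT, Mk, Matrix.mul_fin_two, Matrix.one_fin_two]

lemma Mk_zero : Mk 0 = 1 := by
  simp [Mk, Matrix.one_fin_two]

lemma Mk_mul (k : ℕ) : Mk k * Mk 1 = Mk (k+1) := by
  simp [Mk, Matrix.mul_fin_two]

lemma Mk_mulVec (k : ℕ) (x : Fin 2 → ℝ) : Mk k *ᵥ x = ![x 0 - k * x 1, x 1] := by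
  funext i
  fin_cases i <;> simp [Mk, Matrix.mulVec, dotProduct, Fin.sum_univ_two] <;> ring

lemma measurable_mulVec (M : Matrix (Fin 2) (Fin 2) ℝ) :
    Measurable fun x : Fin 2 → ℝ => M *ᵥ x :=
  (LinearMap.continuous_of_finiteDimensional M.mulVecLin).measurable

/-- Let `T` be the shear map given by the matrix with rows `(1, 1)` and
`(0, 1)`, let `r > 0`, let `B` be the closed ball of radius `r` around the origin in `ℝ²`
with indicator `χ`, and let `μ` be a real-valued functional on bounded measurable functions
`ℝ² → ℝ` satisfying semi-locality (`μ(f) = μ(χ·f)`), invariance (`μ(f ∘ T⁻¹) = μ(f)`) and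
the stated continuity property. Then `μ` is constant: `μ(f) = μ(0)` for every bounded
measurable `f`. -/
theorem shear_invariance_implies_trivial_functional
    (r : ℝ) (hr : 0 < r)
    (μ : ((Fin 2 → ℝ) → ℝ) → ℝ)
    (hsl : ∀ f : (Fin 2 → ℝ) → ℝ, Measurable f → (∃ C, ∀ x, |f x| ≤ C) →
      μ f = μ ((Metric.closedBall (0 : Fin 2 → ℝ) r).indicator f))
    (hinv : ∀ f : (Fin 2 → ℝ) → ℝ, Measurable f → (∃ C, ∀ x, |f x| ≤ C) →
      μ (fun x => f (shearT⁻¹ *ᵥ x)) = μ f)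
    (hcont : ∀ (F : ℕ → (Fin 2 → ℝ) → ℝ) (C : ℝ),
      (∀ n, Measurable (F n)) →
      (∀ n x, |F n x| ≤ C) →
      (∀ n, Function.support (F n) ⊆ Metric.closedBall (0 : Fin 2 → ℝ) r) →
      Filter.Tendsto (fun n => ∫ x, |F n x|) Filter.atTop (nhds 0) →
      Filter.Tendsto (fun n => μ (F n)) Filter.atTop (nhds (μ 0))) :
    ∀ f : (Fin 2 → ℝ) → ℝ, Measurable f → (∃ C, ∀ x, |f x| ≤ C) → μ f = μ 0 := by
  intro f hf ⟨C, hC⟩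
  have hC0 : 0 ≤ C := le_trans (abs_nonneg _) (hC 0)
  set B : Set (Fin 2 → ℝ) := Metric.closedBall (0 : Fin 2 → ℝ) r with hB
  have hBmeas : MeasurableSet B := measurableSet_closedBall
  -- membership in B as coordinate bounds
  have hmemB : ∀ x : Fin 2 → ℝ, x ∈ B ↔ ∀ i, |x i| ≤ r := by
    intro x
    rw [hB, Metric.mem_closedBall, dist_zero_right, pi_norm_le_iff_of_nonneg hr.le]
    simp [Real.norm_eq_abs]
  set g : (Fin 2 → ℝ) → ℝ := B.indicator f with hg
  have hgmeas : Measurable g := hf.indicator hBmeas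
  have hgbd : ∀ x, |g x| ≤ C := by
    intro x
    by_cases hx : x ∈ B
    · simp [hg, Set.indicator_of_mem hx]; exact hC x
    · simp [hg, Set.indicator_of_notMem hx, hC0]
  set h : ℕ → (Fin 2 → ℝ) → ℝ := fun k x => g (Mk k *ᵥ x) with hh
  have hhmeas : ∀ k, Measurable (h k) := fun k => hgmeas.comp (measurable_mulVec _)
  have hhbd : ∀ k x, |h k x| ≤ C := fun k x => hgbd _
  have key : ∀ k, μ (h k) = μ g := by
    intro k
    induction k with
    | zero => simp only [hh, Mk_zero, Matrix.one_mulVec]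
    | succ k ih =>
      have := hinv (h k) (hhmeas k) ⟨C, hhbd k⟩
      rw [← ih, ← this]
      congr 1
      funext x
      simp only [hh, shearT_inv, Matrix.mulVec_mulVec, Mk_mul]
  set F : ℕ → (Fin 2 → ℝ) → ℝ := fun n => B.indicator (h (n + 1)) with hF
  have hFmeas : ∀ n, Measurable (F n) := fun n => (hhmeas _).indicator hBmeas
  have hFbd : ∀ n x, |F n x| ≤ C := by
    intro n x
    by_cases hx : x ∈ B
    · simp [hF, Set.indicator_of_mem hx]; exact hhbd _ _
    · simp [hF, Set.indicator_of_notMem hx, hC0]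
  have hFsupp : ∀ n, Function.support (F n) ⊆ B := fun n => Set.support_indicator_subset
  -- μ (F n) = μ f for all n
  have hμF : ∀ n, μ (F n) = μ f := by
    intro n
    have h1 : μ (h (n+1)) = μ (F n) := hsl (h (n+1)) (hhmeas _) ⟨C, hhbd _⟩
    rw [← h1, key, hg, ← hsl f hf ⟨C, hC⟩]
  -- integral bound
  have hint : Filter.Tendsto (fun n => ∫ x, |F n x|) Filter.atTop (nhds 0) := by
    have hbound : ∀ n : ℕ, ∫ x, |F n x| ≤ 8 * r ^ 2 * C / (n + 1) := by
      intro n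
      set a : ℝ := 2 * r / (n + 1) with ha
      have ha0 : 0 ≤ a := by positivity
      set S : Set (Fin 2 → ℝ) :=
        Set.univ.pi ![Set.Icc (-r) r, Set.Icc (-a) a] with hS
      have hSsub : ∀ x, F n x ≠ 0 → x ∈ S := by
        intro x hx
        have hxB : x ∈ B := hFsupp n hx
        have hxh : h (n+1) x ≠ 0 := by
          intro hz; apply hx; simp [hF, Set.indicator_apply, hz]
        have hxg : Mk (n+1) *ᵥ x ∈ B := by
          by_contra hmem
          exact hxh (by simp only [hh, hg, Set.indicator_of_notMem hmem])
        have h0 : |x 0| ≤ r := (hmemB x).mp hxB 0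
        have h1 : |x 1| ≤ r := (hmemB x).mp hxB 1
        have h2 : |x 0 - (n+1 : ℕ) * x 1| ≤ r := by
          have := (hmemB _).mp hxg 0
          rwa [Mk_mulVec] at this
        have hn1 : (0:ℝ) < (n:ℝ) + 1 := by positivity
        have h3' : ((n:ℝ)+1) * |x 1| ≤ 2 * r := by
          have habs := abs_sub (x 0) (x 0 - ((n:ℝ)+1) * x 1)
          have heq : x 0 - (x 0 - ((n:ℝ)+1) * x 1) = ((n:ℝ)+1) * x 1 := by ring
          rw [heq, abs_mul, abs_of_nonneg hn1.le] at habs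
          push_cast at h2
          linarith
        have h3 : |x 1| ≤ a := by
          rw [ha, le_div_iff₀ hn1]
          linarith
        intro i _
        fin_cases i
        · simpa [abs_le] using h0
        · simpa [abs_le] using h3
      have hSmeas : MeasurableSet S := by
        apply MeasurableSet.univ_pi
        intro i; fin_cases i <;> simp [measurableSet_Icc]
      have hSfin : volume S < ⊤ := by
        rw [hS, volume_pi_pi, Fin.prod_univ_two]
        simp only [Matrix.cons_val_zero, Matrix.cons_val_one, Matrix.head_cons,
          Real.volume_Icc]
        exact ENNReal.mul_lt_top ENNReal.ofReal_lt_top ENNReal.ofReal_lt_top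
      have hSvol : (volume S).toReal = 2 * r * (2 * a) := by
        rw [hS, volume_pi_pi, Fin.prod_univ_two]
        simp only [Matrix.cons_val_zero, Matrix.cons_val_one, Matrix.head_cons,
          Real.volume_Icc, ENNReal.toReal_mul]
        rw [ENNReal.toReal_ofReal (by linarith), ENNReal.toReal_ofReal (by linarith)]
        ring
      have hle : ∫ x, |F n x| ≤ ∫ x, S.indicator (fun _ => C) x := by
        apply integral_mono_of_nonneg
        · exact Filter.Eventually.of_forall fun x => abs_nonneg _
        · exact (integrable_indicator_iff hSmeas).mpr
            (integrableOn_const hSfin.ne)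
        · refine Filter.Eventually.of_forall fun x => ?_
          show |F n x| ≤ S.indicator (fun _ => C) x
          by_cases hx : F n x = 0
          · rw [hx, abs_zero]
            exact Set.indicator_nonneg (fun _ _ => hC0) x
          · rw [Set.indicator_of_mem (hSsub x hx)]
            exact hFbd n x
      have heq : ∫ x, S.indicator (fun _ => C) x = (volume S).toReal * C := by
        rw [integral_indicator_const _ hSmeas]; simp [mul_comm, measureReal_def]
      calc ∫ x, |F n x| ≤ (volume S).toReal * C := by rw [← heq]; exact hle
        _ = 2 * r * (2 * a) * C := by rw [hSvol]
        _ = 8 * r ^ 2 * C / (n + 1) := by rw [ha]; ring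
    have hnonneg : ∀ n : ℕ, 0 ≤ ∫ x, |F n x| :=
      fun n => integral_nonneg fun x => abs_nonneg _
    have hlim : Filter.Tendsto (fun n : ℕ => 8 * r ^ 2 * C / ((n:ℝ) + 1))
        Filter.atTop (nhds 0) := by
      have h2 := (tendsto_const_div_atTop_nhds_zero_nat (8 * r ^ 2 * C)).comp
        (Filter.tendsto_add_atTop_nat 1)
      have heqf : (fun n : ℕ => 8 * r ^ 2 * C / ((n:ℝ) + 1)) =
          (fun n : ℕ => 8 * r ^ 2 * C / (n:ℝ)) ∘ (fun n => n + 1) := by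
        funext n; simp only [Function.comp_apply]; push_cast; ring
      rw [heqf]; exact h2
    exact squeeze_zero hnonneg hbound hlim
  have := hcont F C hFmeas hFbd hFsupp hint
  have hconst : Filter.Tendsto (fun n => μ (F n)) Filter.atTop (nhds (μ f)) := by
    simp only [hμF]; exact tendsto_const_nhds
  exact tendsto_nhds_unique hconst this
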